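/- arXiv:1702.00550 — 3 statements merged into one kernel-verified Lean document; each statement's English description precedes it below -/
import Mathlib

section
/- Let ζ = s + i·t ∈ ℂ with s ≥ 0 and t ≠ 0, write φ = arg ζ ∈ (0,2π), and set ζ̂ := −s + i·t. Then for every real x ≥ 0 one has |x − ζ̂| ≤ 2·c(φ)·|x − ζ|; equivalently, sup_{x ≥ 0} |x − ζ̂|/|x − ζ| ≤ 2·c(φ). -/
/-- The coefficient `c(φ)` from the paper, for `φ = arg ζ ∈ (0, 2π)`:
`c(φ) = 1/|sin φ|` if `φ ∈ (0, π/2) ∪ (3π/2, 2π)`, and `c(φ) = 1` if `φ ∈ [π/2, 3π/2]`. -/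
noncomputable def cArg (φ : ℝ) : ℝ :=
  if (0 < φ ∧ φ < Real.pi / 2) ∨ (3 * Real.pi / 2 < φ ∧ φ < 2 * Real.pi) then
    |Real.sin φ|⁻¹
  else 1

/-- For `ζ = s + i t` with `s ≥ 0`, `t ≠ 0`, `φ = arg ζ ∈ (0, 2π)`, and `ζ̂ = −s + i t`,
every real `x ≥ 0` satisfies `|x − ζ̂| ≤ 2 c(φ) |x − ζ|`
(equivalently, `sup_{x ≥ 0} |x − ζ̂|/|x − ζ| ≤ 2 c(φ)`). -/
theorem abs_sub_reflect_le (s t : ℝ) (hs : 0 ≤ s) (ht : t ≠ 0) (φ : ℝ)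
    (hφ : φ ∈ Set.Ioo (0 : ℝ) (2 * Real.pi))
    (hζφ : (s : ℂ) + (t : ℂ) * Complex.I
      = ((‖(s : ℂ) + (t : ℂ) * Complex.I‖ : ℝ) : ℂ) * Complex.exp ((φ : ℂ) * Complex.I)) :
    ∀ x : ℝ, 0 ≤ x →
      ‖(x : ℂ) - ((-s : ℝ) + (t : ℂ) * Complex.I)‖
        ≤ 2 * cArg φ * ‖(x : ℂ) - ((s : ℂ) + (t : ℂ) * Complex.I)‖ := by
  intro x hx
  set r := ‖(s : ℂ) + (t : ℂ) * Complex.I‖ with hrdef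
  have hre : s = r * Real.cos φ := by
    have := congrArg Complex.re hζφ
    simpa [Complex.ext_iff, Complex.exp_mul_I, Complex.mul_re, Complex.mul_im, Complex.cos_ofReal_re, Complex.sin_ofReal_re] using this
  have him : t = r * Real.sin φ := by
    have := congrArg Complex.im hζφ
    simpa [Complex.ext_iff, Complex.exp_mul_I, Complex.mul_re, Complex.mul_im, Complex.cos_ofReal_re, Complex.sin_ofReal_re] using this
  have hr0 : 0 < r := by
    have hz : ((s : ℂ) + (t : ℂ) * Complex.I) ≠ 0 := by
      intro h
      apply ht
      exact (by simpa [Complex.ext_iff] using h : s = 0 ∧ t = 0).2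
    exact norm_pos_iff.mpr hz
  have hA : ‖(x : ℂ) - ((-s : ℝ) + (t : ℂ) * Complex.I)‖
      = Real.sqrt ((x + s) ^ 2 + t ^ 2) := by
    rw [Complex.norm_def]; congr 1
    simp [Complex.normSq_apply]; ring
  have hB : ‖(x : ℂ) - ((s : ℂ) + (t : ℂ) * Complex.I)‖
      = Real.sqrt ((x - s) ^ 2 + t ^ 2) := by
    rw [Complex.norm_def]; congr 1
    simp [Complex.normSq_apply]; ring
  have hr2 : r ^ 2 = s ^ 2 + t ^ 2 := by
    rw [hre, him]
    linear_combination (-(r ^ 2)) * (Real.sin_sq_add_cos_sq φ)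
  rcases eq_or_lt_of_le hs with hseq | hspos
  · -- s = 0 : cArg φ = 1
    have hcos : Real.cos φ = 0 := by
      have := hre; rw [← hseq] at this
      rcases mul_eq_zero.mp this.symm with h | h
      · exact absurd h (ne_of_gt hr0)
      · exact h
    have hc : cArg φ = 1 := by
      rw [cArg, if_neg]
      rintro (⟨h1, h2⟩ | ⟨h1, h2⟩)
      · have : 0 < Real.cos φ := Real.cos_pos_of_mem_Ioo
          ⟨by linarith [Real.pi_pos], h2⟩
        linarith [hcos ▸ this]
      · have := Real.cos_pos_of_mem_Ioo (x := φ - 2 * Real.pi)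
          ⟨by linarith, by linarith [Real.pi_pos]⟩
        rw [Real.cos_sub_two_pi] at this
        linarith [hcos ▸ this]
    rw [hc, hA, hB, ← hseq]
    have hnn : 0 ≤ Real.sqrt ((x - 0) ^ 2 + t ^ 2) := Real.sqrt_nonneg _
    simp only [add_zero, sub_zero] at *
    linarith
  · -- s > 0 : cArg φ = |sin φ|⁻¹ = r / |t|
    have hcos : 0 < Real.cos φ := by
      rcases lt_or_ge 0 (Real.cos φ) with h | h
      · exact h
      · exfalso; nlinarith
    have hcond : (0 < φ ∧ φ < Real.pi / 2) ∨ (3 * Real.pi / 2 < φ ∧ φ < 2 * Real.pi) := by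
      by_contra hcon
      push_neg at hcon
      have h1 := hcon.1 hφ.1
      have h2 := hcon.2
      have h3 : φ ≤ 3 * Real.pi / 2 := by
        by_contra h4; push_neg at h4; linarith [h2 h4, hφ.2]
      have : Real.cos φ ≤ 0 := Real.cos_nonpos_of_pi_div_two_le_of_le h1 (by linarith)
      linarith
    have hsin : |Real.sin φ| = |t| / r := by
      rw [him, abs_mul, abs_of_pos hr0]
      field_simp
    have hc : cArg φ = r / |t| := by
      rw [cArg, if_pos hcond, hsin]
      rw [inv_div]
    have ht2 : 0 < t ^ 2 := by positivity
    have habs : 0 < |t| := abs_pos.mpr ht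
    rw [hc, hA, hB]
    have key : (x + s) ^ 2 + t ^ 2 ≤ (2 * (r / |t|)) ^ 2 * ((x - s) ^ 2 + t ^ 2) := by
      have h1 : (2 * (r / |t|)) ^ 2 = 4 * (s ^ 2 + t ^ 2) / t ^ 2 := by
        rw [mul_pow, div_pow, sq_abs, hr2]; ring
      rw [h1, div_mul_eq_mul_div, le_div_iff₀ ht2]
      nlinarith [sq_nonneg (2 * s * (x - s) - t ^ 2), sq_nonneg (t * (x - s)), sq_nonneg (t ^ 2),
        mul_nonneg (mul_nonneg hs hx) ht2.le]
    calc Real.sqrt ((x + s) ^ 2 + t ^ 2)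
        ≤ Real.sqrt ((2 * (r / |t|)) ^ 2 * ((x - s) ^ 2 + t ^ 2)) := Real.sqrt_le_sqrt key
      _ = 2 * (r / |t|) * Real.sqrt ((x - s) ^ 2 + t ^ 2) := by
          rw [Real.sqrt_mul (by positivity), Real.sqrt_sq (by positivity)]
end

section
/- Let A be a unital C*-algebra and let a ∈ A be selfadjoint with 0 ≤ a. Let ζ = s + i·t ∈ ℂ with s ≥ 0 and t ≠ 0, write φ = arg ζ ∈ (0,2π), and set ζ̂ := −s + i·t. Then both a − ζ·1 and a − ζ̂·1 are invertible, and ‖(a − ζ̂·1)·(a − ζ·1)⁻¹‖ ≤ 2·c(φ). -/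
lemma cArg_nonneg (φ : ℝ) : 0 ≤ cArg φ := by
  unfold cArg
  split <;> positivity

lemma key_ineq (x s t : ℝ) (hx : 0 ≤ x) (hs : 0 ≤ s) :
    t^2 * ((x+s)^2 + t^2) ≤ 4 * (s^2+t^2) * ((x-s)^2 + t^2) := by
  nlinarith [sq_nonneg (2*s*(x-s) - t^2), sq_nonneg (t*(x-s)), sq_nonneg (t^2),
    mul_nonneg hx hs, sq_nonneg t, mul_nonneg (mul_nonneg hx hs) (sq_nonneg t)]

lemma sqrt_ineq (x s t : ℝ) (hx : 0 ≤ x) (hs : 0 ≤ s) (ht : t ≠ 0) :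
    Real.sqrt ((x+s)^2 + t^2) ≤
      2 * (Real.sqrt (s^2+t^2) / |t|) * Real.sqrt ((x-s)^2+t^2) := by
  have ht2 : (0:ℝ) < t^2 := by positivity
  set K : ℝ := 2 * (Real.sqrt (s^2+t^2) / |t|) with hK
  have hK0 : 0 ≤ K := by positivity
  have hKsq : K^2 = 4 * (s^2+t^2) / t^2 := by
    rw [hK, mul_pow, div_pow, Real.sq_sqrt (by positivity), sq_abs]
    ring
  calc Real.sqrt ((x+s)^2 + t^2) ≤ Real.sqrt (K^2 * ((x-s)^2+t^2)) := by
        apply Real.sqrt_le_sqrt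
        rw [hKsq, div_mul_eq_mul_div, le_div_iff₀ ht2]
        have := key_ineq x s t hx hs
        linarith
    _ = K * Real.sqrt ((x-s)^2+t^2) := by
        rw [Real.sqrt_mul (by positivity), Real.sqrt_sq hK0]

/-- In a unital C*-algebra, let `a` be selfadjoint with `0 ≤ a`. For `ζ = s + i t` with
`s ≥ 0`, `t ≠ 0`, `φ = arg ζ ∈ (0, 2π)`, and `ζ̂ = −s + i t`, both `a − ζ·1` and `a − ζ̂·1`
are invertible and `‖(a − ζ̂·1)(a − ζ·1)⁻¹‖ ≤ 2 c(φ)`. -/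
theorem reflected_resolvent_norm_bound {A : Type*} [CStarAlgebra A]
    [PartialOrder A] [StarOrderedRing A]
    (a : A) (ha : IsSelfAdjoint a) (ha0 : 0 ≤ a)
    (s t : ℝ) (hs : 0 ≤ s) (ht : t ≠ 0) (φ : ℝ)
    (hφ : φ ∈ Set.Ioo (0 : ℝ) (2 * Real.pi))
    (hζφ : (s : ℂ) + (t : ℂ) * Complex.I
      = ((‖(s : ℂ) + (t : ℂ) * Complex.I‖ : ℝ) : ℂ) * Complex.exp ((φ : ℂ) * Complex.I)) :
    IsUnit (a - ((s : ℂ) + (t : ℂ) * Complex.I) • (1 : A)) ∧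
    IsUnit (a - (((-s : ℝ) : ℂ) + (t : ℂ) * Complex.I) • (1 : A)) ∧
    ‖(a - (((-s : ℝ) : ℂ) + (t : ℂ) * Complex.I) • (1 : A)) *
        Ring.inverse (a - ((s : ℂ) + (t : ℂ) * Complex.I) • (1 : A))‖ ≤ 2 * cArg φ := by
  have hsn : IsStarNormal a := ha.isStarNormal
  set ζ : ℂ := (s:ℂ) + (t:ℂ) * Complex.I with hζdef
  set ζ' : ℂ := ((-s : ℝ):ℂ) + (t:ℂ) * Complex.I with hζ'def
  -- spectrum of `a` consists of nonnegative reals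
  have hspec : ∀ z ∈ spectrum ℂ a, ∃ x : ℝ, 0 ≤ x ∧ z = (x:ℂ) := by
    intro z hz
    rw [← ha.spectrumRestricts.algebraMap_image] at hz
    obtain ⟨x, hx, rfl⟩ := hz
    exact ⟨x, spectrum_nonneg_of_nonneg ha0 hx, rfl⟩
  have hζspec : ∀ z ∈ spectrum ℂ a, z - ζ ≠ 0 := by
    intro z hz h0
    obtain ⟨x, -, rfl⟩ := hspec z hz
    apply ht
    have := congrArg Complex.im h0
    simpa [hζdef] using this
  have hζ'spec : ∀ z ∈ spectrum ℂ a, z - ζ' ≠ 0 := by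
    intro z hz h0
    obtain ⟨x, -, rfl⟩ := hspec z hz
    apply ht
    have := congrArg Complex.im h0
    simpa [hζ'def] using this
  have hζmem : ζ ∉ spectrum ℂ a := fun h => hζspec ζ h (sub_self ζ)
  have hζ'mem : ζ' ∉ spectrum ℂ a := fun h => hζ'spec ζ' h (sub_self ζ')
  have hUζ : IsUnit (a - ζ • (1:A)) := by
    have h := (spectrum.notMem_iff.mp hζmem).neg
    simpa [Algebra.algebraMap_eq_smul_one, neg_sub] using h
  have hUζ' : IsUnit (a - ζ' • (1:A)) := by
    have h := (spectrum.notMem_iff.mp hζ'mem).neg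
    simpa [Algebra.algebraMap_eq_smul_one, neg_sub] using h
  refine ⟨hUζ, hUζ', ?_⟩
  -- express the product as continuous functional calculus of `(z - ζ')/(z - ζ)`
  have hsub : ∀ c : ℂ, cfc (fun z : ℂ => z - c) a = a - c • 1 := by
    intro c
    rw [cfc_sub (fun z : ℂ => z) (fun _ => c) a, cfc_id' ℂ a, cfc_const c a,
      Algebra.algebraMap_eq_smul_one]
  have hmain : (a - ζ' • (1:A)) * Ring.inverse (a - ζ • (1:A))
      = cfc (fun z : ℂ => (z - ζ') / (z - ζ)) a := by
    rw [cfc_map_div (fun z => z - ζ') (fun z => z - ζ) a hζspec, hsub, hsub]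
  rw [hmain]
  -- polar coordinates
  have hrpos : 0 < ‖ζ‖ := by
    refine norm_pos_iff.mpr fun h => ht ?_
    simpa [hζdef] using congrArg Complex.im h
  have hpol := hζφ
  rw [Complex.exp_mul_I, ← Complex.ofReal_cos, ← Complex.ofReal_sin] at hpol
  have hscos : s = ‖ζ‖ * Real.cos φ := by
    simpa [hζdef, Complex.cos_ofReal_re] using congrArg Complex.re hpol
  have htsin : t = ‖ζ‖ * Real.sin φ := by
    simpa [hζdef, Complex.sin_ofReal_re] using congrArg Complex.im hpol
  have habsζ : ‖ζ‖ = Real.sqrt (s^2 + t^2) := by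
    rw [hζdef, Complex.norm_def]
    congr 1
    simp [Complex.normSq_apply]
    ring
  -- absolute value formulas on the (real, nonnegative) spectrum
  have habs1 : ∀ x : ℝ, ‖(x:ℂ) - ζ'‖ = Real.sqrt ((x+s)^2 + t^2) := by
    intro x
    rw [hζ'def, Complex.norm_def]
    congr 1
    simp [Complex.normSq_apply]
    ring
  have habs2 : ∀ x : ℝ, ‖(x:ℂ) - ζ‖ = Real.sqrt ((x-s)^2 + t^2) := by
    intro x
    rw [hζdef, Complex.norm_def]
    congr 1
    simp [Complex.normSq_apply]
    ring
  have hdenpos : ∀ x : ℝ, 0 < Real.sqrt ((x-s)^2 + t^2) := fun x =>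
    Real.sqrt_pos.mpr (by positivity)
  refine norm_cfc_le (by have := cArg_nonneg φ; linarith) fun z hz => ?_
  obtain ⟨x, hx0, rfl⟩ := hspec z hz
  rw [norm_div, habs1, habs2,
    div_le_iff₀ (hdenpos x)]
  by_cases hcond : (0 < φ ∧ φ < Real.pi / 2) ∨
      (3 * Real.pi / 2 < φ ∧ φ < 2 * Real.pi)
  · -- here `cArg φ = |sin φ|⁻¹ = √(s²+t²)/|t|`
    have hsin : Real.sin φ = t / ‖ζ‖ := by
      rw [htsin]; field_simp
    have hcArg : cArg φ = Real.sqrt (s^2+t^2) / |t| := by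
      rw [cArg, if_pos hcond, hsin, abs_div, abs_of_pos hrpos, habsζ,
        inv_div, div_eq_div_iff (by positivity) (abs_ne_zero.mpr ht)]
    rw [hcArg]
    exact sqrt_ineq x s t hx0 hs ht
  · -- here `φ ∈ [π/2, 3π/2]`, so `cos φ ≤ 0`, hence `s = 0`
    push_neg at hcond
    have h1 : Real.pi / 2 ≤ φ := hcond.1 hφ.1
    have h2 : φ ≤ 3 * Real.pi / 2 := by
      by_contra h
      linarith [hcond.2 (lt_of_not_ge h), hφ.2]
    have hcos : Real.cos φ ≤ 0 :=
      Real.cos_nonpos_of_pi_div_two_le_of_le h1 (by linarith)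
    have hs0 : s = 0 := le_antisymm (hscos ▸ mul_nonpos_of_nonneg_of_nonpos hrpos.le hcos) hs
    have hcArg : cArg φ = 1 := by
      rw [cArg, if_neg (by push_neg; exact hcond)]
    rw [hcArg, hs0]
    have : Real.sqrt ((x+0)^2 + t^2) = Real.sqrt ((x-0)^2 + t^2) := by norm_num
    rw [this]
    have hpos : 0 < Real.sqrt ((x-0)^2 + t^2) :=
      Real.sqrt_pos.mpr (by positivity)
    linarith
end

section
/- Let A be a unital C*-algebra, let f ∈ A be invertible, and let b ∈ A be such that b̃ := f*·b·f is selfadjoint with 0 ≤ b̃. Set q₀ := (f·f*)⁻¹. Then for every ζ ∈ ℂ with ζ ∉ [0,∞), writing φ = arg ζ ∈ (0,2π), the element b − ζ·q₀ is invertible in A and one has the two bounds ‖(b − ζ·q₀)⁻¹‖ ≤ ‖f‖²·c(φ)·|ζ|⁻¹ and ‖b·(b − ζ·q₀)⁻¹‖ ≤ ‖f‖·‖f⁻¹‖·c(φ). -/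
lemma cArg_bounds (ζ : ℂ) (φ : ℝ) (hζ0 : ζ ≠ 0)
    (hφ : φ ∈ Set.Ioo (0 : ℝ) (2 * Real.pi))
    (hζφ : ζ = (‖ζ‖ : ℂ) * Complex.exp ((φ : ℂ) * Complex.I))
    (x : ℝ) (hx : 0 ≤ x) :
    ‖ζ‖ ≤ cArg φ * ‖(x : ℂ) - ζ‖ ∧
      x ≤ cArg φ * ‖(x : ℂ) - ζ‖ := by
  set r := ‖ζ‖ with hr
  have hrpos : 0 < r := norm_pos_iff.mpr hζ0
  have hre : ζ.re = r * Real.cos φ := by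
    conv_lhs => rw [hζφ]
    rw [Complex.re_ofReal_mul, Complex.exp_ofReal_mul_I_re]
  have him : ζ.im = r * Real.sin φ := by
    conv_lhs => rw [hζφ]
    rw [Complex.im_ofReal_mul, Complex.exp_ofReal_mul_I_im]
  set D := ‖(x : ℂ) - ζ‖ with hD
  have hDnn : 0 ≤ D := norm_nonneg _
  have hsc : Real.sin φ ^ 2 + Real.cos φ ^ 2 = 1 := Real.sin_sq_add_cos_sq φ
  have habs2 : D ^ 2 = x ^ 2 - 2 * x * (r * Real.cos φ) + r ^ 2 := by
    rw [hD, Complex.sq_norm, Complex.normSq_apply]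
    simp only [Complex.sub_re, Complex.sub_im, Complex.ofReal_re, Complex.ofReal_im, hre, him]
    linear_combination r ^ 2 * hsc
  have key : ∀ a : ℝ, 0 ≤ a → a ^ 2 ≤ D ^ 2 → a ≤ D := fun a ha h2 =>
    (pow_le_pow_iff_left₀ ha hDnn (by norm_num)).mp h2
  by_cases hcase : (0 < φ ∧ φ < Real.pi / 2) ∨ (3 * Real.pi / 2 < φ ∧ φ < 2 * Real.pi)
  · have hc : cArg φ = |Real.sin φ|⁻¹ := if_pos hcase
    have hs : 0 < |Real.sin φ| := by
      rcases hcase with ⟨h1, h2⟩ | ⟨h1, h2⟩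
      · rw [abs_of_pos (Real.sin_pos_of_pos_of_lt_pi h1 (by linarith [Real.pi_pos]))]
        exact Real.sin_pos_of_pos_of_lt_pi h1 (by linarith [Real.pi_pos])
      · have : Real.sin φ < 0 := by
          have := Real.sin_neg_of_neg_of_neg_pi_lt (x := φ - 2 * Real.pi)
            (by linarith) (by linarith [Real.pi_pos])
          rwa [Real.sin_sub_two_pi] at this
        rw [abs_of_neg this]; linarith
    have e1 : r ^ 2 * Real.sin φ ^ 2 = r ^ 2 - r ^ 2 * Real.cos φ ^ 2 := by
      linear_combination r ^ 2 * hsc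
    have e2 : x ^ 2 * Real.sin φ ^ 2 = x ^ 2 - x ^ 2 * Real.cos φ ^ 2 := by
      linear_combination x ^ 2 * hsc
    have h1 : r * |Real.sin φ| ≤ D := by
      apply key _ (by positivity)
      rw [habs2, mul_pow, sq_abs, e1]
      nlinarith [sq_nonneg (x - r * Real.cos φ)]
    have h2 : x * |Real.sin φ| ≤ D := by
      apply key _ (by positivity)
      rw [habs2, mul_pow, sq_abs, e2]
      nlinarith [sq_nonneg (x * Real.cos φ - r)]
    rw [hc]
    constructor
    · rw [← one_div, div_mul_eq_mul_div, le_div_iff₀ hs]; linarith [h1]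
    · rw [← one_div, div_mul_eq_mul_div, le_div_iff₀ hs]; linarith [h2]
  · have hc : cArg φ = 1 := if_neg hcase
    push_neg at hcase
    obtain ⟨hA, hB⟩ := hcase
    have h1 : Real.pi / 2 ≤ φ := hA hφ.1
    have h2 : φ ≤ 3 * Real.pi / 2 := by
      by_contra h
      linarith [hB (by linarith), hφ.2]
    have hcos : Real.cos φ ≤ 0 :=
      Real.cos_nonpos_of_pi_div_two_le_of_le h1 (by linarith)
    have hxr : 0 ≤ -2 * x * (r * Real.cos φ) := by
      have : r * Real.cos φ ≤ 0 := mul_nonpos_of_nonneg_of_nonpos hrpos.le hcos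
      nlinarith
    rw [hc, one_mul]
    constructor
    · apply key _ hrpos.le
      rw [habs2]; nlinarith
    · apply key _ hx
      rw [habs2]; nlinarith

section CfcPart

variable {A : Type*} [CStarAlgebra A] [PartialOrder A] [StarOrderedRing A]

/-- Resolvent bounds for a nonnegative element. -/
lemma resolvent_bounds_of_nonneg (a : A) (hsa : IsSelfAdjoint a) (hnn : 0 ≤ a)
    (ζ : ℂ) (φ : ℝ)
    (hζ : ∀ x : ℝ, 0 ≤ x → ζ ≠ (x : ℂ))
    (hφ : φ ∈ Set.Ioo (0 : ℝ) (2 * Real.pi))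
    (hζφ : ζ = (‖ζ‖ : ℂ) * Complex.exp ((φ : ℂ) * Complex.I)) :
    IsUnit (a - ζ • 1) ∧
      ‖Ring.inverse (a - ζ • 1)‖ ≤ cArg φ * (‖ζ‖)⁻¹ ∧
      ‖a * Ring.inverse (a - ζ • 1)‖ ≤ cArg φ := by
  have hζ0 : ζ ≠ 0 := by simpa using hζ 0 le_rfl
  have hrpos : 0 < ‖ζ‖ := norm_pos_iff.mpr hζ0
  have hnorm : IsStarNormal a := hsa.isStarNormal
  -- every spectral point is a nonnegative real
  have hspec : ∀ z ∈ spectrum ℂ a, ∃ x : ℝ, 0 ≤ x ∧ z = (x : ℂ) := by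
    intro z hz
    refine ⟨Complex.reCLM z, ?_, ?_⟩
    · exact spectrum_nonneg_of_nonneg hnn (hsa.spectrumRestricts.apply_mem hz)
    · exact (hsa.spectrumRestricts.rightInvOn hz).symm
  have hne : ∀ z ∈ spectrum ℂ a, z - ζ ≠ 0 := by
    intro z hz
    obtain ⟨x, hx, rfl⟩ := hspec z hz
    exact sub_ne_zero.mpr fun h => hζ x hx h.symm
  have hζspec : ζ ∉ spectrum ℂ a := fun hz => by
    obtain ⟨x, hx, h⟩ := hspec ζ hz
    exact hζ x hx h
  have hT : IsUnit (a - ζ • 1) := by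
    have := spectrum.notMem_iff.mp hζspec
    rw [← IsUnit.neg_iff, neg_sub] at this
    simpa [Algebra.algebraMap_eq_smul_one] using this
  have hTcfc : cfc (fun z : ℂ => z - ζ) a = a - ζ • 1 := by
    rw [cfc_sub (fun z : ℂ => z) (fun _ : ℂ => ζ) a, cfc_id' ℂ a, cfc_const ζ a,
      Algebra.algebraMap_eq_smul_one]
  have hne' : ∀ z ∈ spectrum ℂ a, (fun z : ℂ => z - ζ) z ≠ 0 := hne
  have hTinv : Ring.inverse (a - ζ • 1) = cfc (fun z : ℂ => (z - ζ)⁻¹) a := by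
    rw [← hTcfc, ← cfc_inv (fun z : ℂ => z - ζ) a hne']
  refine ⟨hT, ?_, ?_⟩
  · rw [hTinv]
    apply norm_cfc_le (mul_nonneg (cArg_nonneg φ) (by positivity))
    intro z hz
    obtain ⟨x, hx, rfl⟩ := hspec z hz
    have hd : 0 < ‖(x : ℂ) - ζ‖ := norm_pos_iff.mpr (hne _ hz)
    have hb := (cArg_bounds ζ φ hζ0 hφ hζφ x hx).1
    rw [norm_inv]
    calc (‖(x : ℂ) - ζ‖)⁻¹ = 1 / ‖(x : ℂ) - ζ‖ := (one_div _).symm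
      _ ≤ cArg φ / ‖ζ‖ := by
          rw [div_le_div_iff₀ hd hrpos]; linarith
      _ = cArg φ * (‖ζ‖)⁻¹ := div_eq_mul_inv _ _
  · have hgcont : ContinuousOn (fun z : ℂ => (z - ζ)⁻¹) (spectrum ℂ a) :=
      ContinuousOn.inv₀ (by fun_prop) hne'
    have hmul : cfc (fun z : ℂ => z * (z - ζ)⁻¹) a
        = a * cfc (fun z : ℂ => (z - ζ)⁻¹) a := by
      rw [cfc_mul _ _ a (by fun_prop) hgcont, cfc_id' ℂ a]
    rw [hTinv, ← hmul]
    apply norm_cfc_le (cArg_nonneg φ)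
    intro z hz
    obtain ⟨x, hx, rfl⟩ := hspec z hz
    have hd : 0 < ‖(x : ℂ) - ζ‖ := norm_pos_iff.mpr (hne _ hz)
    have hb := (cArg_bounds ζ φ hζ0 hφ hζφ x hx).2
    rw [norm_mul, norm_inv, Complex.norm_of_nonneg hx,
      ← div_eq_mul_inv, div_le_iff₀ hd]
    linarith

end CfcPart

/-- In a unital C*-algebra, let `f` be invertible and let `b` be such that `b̃ = f* b f` is
selfadjoint with `0 ≤ b̃`; set `q₀ = (f f*)⁻¹`. Then for any `ζ ∈ ℂ \ [0,∞)` with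
`φ = arg ζ ∈ (0, 2π)`, the element `b − ζ q₀` is invertible and
`‖(b − ζ q₀)⁻¹‖ ≤ ‖f‖² c(φ) |ζ|⁻¹` as well as `‖b (b − ζ q₀)⁻¹‖ ≤ ‖f‖ ‖f⁻¹‖ c(φ)`. -/
theorem generalized_resolvent_bounds {A : Type*} [CStarAlgebra A]
    [PartialOrder A] [StarOrderedRing A]
    (f b : A) (hf : IsUnit f)
    (hbsa : IsSelfAdjoint (star f * b * f)) (hbnn : 0 ≤ star f * b * f)
    (ζ : ℂ) (φ : ℝ)
    (hζ : ∀ x : ℝ, 0 ≤ x → ζ ≠ (x : ℂ))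
    (hφ : φ ∈ Set.Ioo (0 : ℝ) (2 * Real.pi))
    (hζφ : ζ = (‖ζ‖ : ℂ) * Complex.exp ((φ : ℂ) * Complex.I)) :
    IsUnit (b - ζ • Ring.inverse (f * star f)) ∧
      ‖Ring.inverse (b - ζ • Ring.inverse (f * star f))‖
        ≤ ‖f‖ ^ 2 * cArg φ * (‖ζ‖)⁻¹ ∧
      ‖b * Ring.inverse (b - ζ • Ring.inverse (f * star f))‖
        ≤ ‖f‖ * ‖Ring.inverse f‖ * cArg φ := by
  obtain ⟨u, rfl⟩ := hf
  set a : A := star ↑u * b * ↑u with ha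
  obtain ⟨hT, hn1, hn2⟩ := resolvent_bounds_of_nonneg a hbsa hbnn ζ φ hζ hφ hζφ
  set w : Aˣ := hT.unit with hw
  have hwv : (w : A) = a - ζ • 1 := hT.unit_spec
  set su : Aˣ := star u with hsu
  have hsuv : (su : A) = star (u : A) := Units.coe_star u
  -- the two basic cancellation identities
  have e1 : ((su⁻¹ : Aˣ) : A) * star (u : A) = 1 := by
    rw [← hsuv]; exact su.inv_mul
  have e2 : ((u : A)) * ((u⁻¹ : Aˣ) : A) = 1 := u.mul_inv
  have e3 : (((u⁻¹ : Aˣ)) : A) * (u : A) = 1 := u.inv_mul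
  -- q₀ = ↑su⁻¹ * ↑u⁻¹
  have hq : Ring.inverse ((u : A) * star (u : A)) = ((su⁻¹ : Aˣ) : A) * ((u⁻¹ : Aˣ) : A) := by
    have : ((u * su : Aˣ) : A) = (u : A) * star (u : A) := by
      rw [Units.val_mul, hsuv]
    rw [← this, Ring.inverse_unit, mul_inv_rev, Units.val_mul]
  -- b expressed through a
  have hb : b = ((su⁻¹ : Aˣ) : A) * a * ((u⁻¹ : Aˣ) : A) := by
    rw [ha]
    calc b = (((su⁻¹ : Aˣ) : A) * star (u : A)) * b * ((u : A) * ((u⁻¹ : Aˣ) : A)) := by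
            rw [e1, e2, one_mul, mul_one]
      _ = ((su⁻¹ : Aˣ) : A) * (star (u : A) * b * (u : A)) * ((u⁻¹ : Aˣ) : A) := by
            noncomm_ring
  set W : Aˣ := su⁻¹ * w * u⁻¹ with hW
  have hWv : (W : A) = b - ζ • Ring.inverse ((u : A) * star (u : A)) := by
    rw [hW, Units.val_mul, Units.val_mul, hwv, hq, hb]
    rw [mul_sub, sub_mul]
    congr 1
    · noncomm_ring
  have hUnit : IsUnit (b - ζ • Ring.inverse ((u : A) * star (u : A))) := hWv ▸ W.isUnit
  have hWinv : Ring.inverse (b - ζ • Ring.inverse ((u : A) * star (u : A)))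
      = (u : A) * Ring.inverse (a - ζ • 1) * star (u : A) := by
    have hwi : ((w⁻¹ : Aˣ) : A) = Ring.inverse (a - ζ • 1) := by
      rw [← hwv, Ring.inverse_unit]
    rw [← hWv, Ring.inverse_unit W, hW, mul_inv_rev, mul_inv_rev, inv_inv, inv_inv,
      Units.val_mul, Units.val_mul, hsuv, hwi, mul_assoc]
  have hnorm_inv : ‖Ring.inverse ((u⁻¹ : Aˣ) : A)‖ = ‖(u : A)‖ := by
    rw [Ring.inverse_unit, inv_inv]
  refine ⟨hUnit, ?_, ?_⟩
  · rw [hWinv]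
    calc ‖(u : A) * Ring.inverse (a - ζ • 1) * star (u : A)‖
        ≤ ‖(u : A) * Ring.inverse (a - ζ • 1)‖ * ‖star (u : A)‖ := norm_mul_le _ _
      _ ≤ ‖(u : A)‖ * ‖Ring.inverse (a - ζ • 1)‖ * ‖star (u : A)‖ := by
          gcongr; exact norm_mul_le _ _
      _ = ‖(u : A)‖ ^ 2 * ‖Ring.inverse (a - ζ • 1)‖ := by
          rw [norm_star]; ring
      _ ≤ ‖(u : A)‖ ^ 2 * (cArg φ * (‖ζ‖)⁻¹) := by
          gcongr
      _ = ‖(u : A)‖ ^ 2 * cArg φ * (‖ζ‖)⁻¹ := by ring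
  · rw [hWinv]
    have hkey : b * ((u : A) * Ring.inverse (a - ζ • 1) * star (u : A))
        = ((su⁻¹ : Aˣ) : A) * (a * Ring.inverse (a - ζ • 1)) * star (u : A) := by
      conv_lhs => rw [hb]
      calc ((su⁻¹ : Aˣ) : A) * a * ((u⁻¹ : Aˣ) : A) *
            ((u : A) * Ring.inverse (a - ζ • 1) * star (u : A))
          = ((su⁻¹ : Aˣ) : A) * a * ((((u⁻¹ : Aˣ) : A) * (u : A)) *
              Ring.inverse (a - ζ • 1)) * star (u : A) := by noncomm_ring
        _ = ((su⁻¹ : Aˣ) : A) * (a * Ring.inverse (a - ζ • 1)) * star (u : A) := by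
            rw [e3, one_mul]; noncomm_ring
    rw [hkey]
    have hsu_norm : ‖((su⁻¹ : Aˣ) : A)‖ = ‖Ring.inverse ((u : A))‖ := by
      rw [Ring.inverse_unit]
      have : ((su⁻¹ : Aˣ) : A) = star (((u⁻¹ : Aˣ)) : A) := by
        rw [hsu, ← Units.coe_star_inv]
      rw [this, norm_star]
    calc ‖((su⁻¹ : Aˣ) : A) * (a * Ring.inverse (a - ζ • 1)) * star (u : A)‖
        ≤ ‖((su⁻¹ : Aˣ) : A) * (a * Ring.inverse (a - ζ • 1))‖ * ‖star (u : A)‖ :=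
          norm_mul_le _ _
      _ ≤ ‖((su⁻¹ : Aˣ) : A)‖ * ‖a * Ring.inverse (a - ζ • 1)‖ * ‖star (u : A)‖ := by
          gcongr; exact norm_mul_le _ _
      _ ≤ ‖((su⁻¹ : Aˣ) : A)‖ * cArg φ * ‖star (u : A)‖ := by
          gcongr
      _ = ‖(u : A)‖ * ‖Ring.inverse ((u : A))‖ * cArg φ := by
          rw [hsu_norm, norm_star]; ring
end
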